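/- For any nonnegative integers a, b with a + b ≥ 2, the word 0^a 101 0^b is Ulam if and only if a + b is odd (equivalently, the length of the word is even). -/

import Mathlib

/-- Ulam words with fuel bounding the recursion depth (fuel ≥ length suffices). -/
def UlamN : ℕ → List Bool → Prop
  | 0, _ => False
  | n + 1, w =>
    w = [false] ∨ w = [true] ∨
      ∃! p : List Bool × List Bool,
        p.1 ≠ [] ∧ p.2 ≠ [] ∧ UlamN n p.1 ∧ UlamN n p.2 ∧ p.1 ≠ p.2 ∧ p.1 ++ p.2 = w

/-- A word over {0,1} (`false` = 0, `true` = 1) is Ulam. -/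
def IsUlam (w : List Bool) : Prop := UlamN w.length w

/-- The integer whose binary representation (most significant digit first) is `w`. -/
def binVal (w : List Bool) : ℕ := w.foldl (fun acc b => 2 * acc + b.toNat) 0

lemma ulamN_nil (n : ℕ) : ¬ UlamN n [] := by
  cases n with
  | zero => simp [UlamN]
  | succ n =>
    intro h
    rcases h with h | h | ⟨p, ⟨h1, _, _, _, _, h6⟩, _⟩
    · simp at h
    · simp at h
    · exact h1 (List.append_eq_nil_iff.mp h6).1

lemma ulamN_imp : ∀ (k : ℕ) (w : List Bool), w.length ≤ k → ∀ n m, w.length ≤ n →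
    w.length ≤ m → UlamN n w → UlamN m w := by
  intro k
  induction k with
  | zero =>
    intro w hw n m _ _ h
    have : w = [] := List.eq_nil_of_length_eq_zero (Nat.le_zero.mp hw)
    subst this
    exact absurd h (ulamN_nil n)
  | succ k ih =>
    intro w hw n m hn hm h
    by_cases h0 : w = []
    · subst h0; exact absurd h (ulamN_nil n)
    have hl : 1 ≤ w.length := List.length_pos_iff.mpr h0
    obtain ⟨n', rfl⟩ : ∃ n', n = n' + 1 := ⟨n - 1, by omega⟩
    obtain ⟨m', rfl⟩ : ∃ m', m = m' + 1 := ⟨m - 1, by omega⟩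
    rw [show UlamN (n' + 1) w = _ from rfl] at h
    simp only [UlamN] at h ⊢
    rcases h with h | h | ⟨p, ⟨h1, h2, h3, h4, h5, h6⟩, hu⟩
    · exact Or.inl h
    · exact Or.inr (Or.inl h)
    refine Or.inr (Or.inr ⟨p, ⟨h1, h2, ?_, ?_, h5, h6⟩, ?_⟩)
    all_goals
      have hlen : p.1.length + p.2.length = w.length := by
        rw [← List.length_append, h6]
      have e1 : 1 ≤ p.1.length := List.length_pos_iff.mpr h1
      have e2 : 1 ≤ p.2.length := List.length_pos_iff.mpr h2
    · exact ih p.1 (by omega) n' m' (by omega) (by omega) h3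
    · exact ih p.2 (by omega) n' m' (by omega) (by omega) h4
    · rintro q ⟨g1, g2, g3, g4, g5, g6⟩
      have glen : q.1.length + q.2.length = w.length := by
        rw [← List.length_append, g6]
      have f1 : 1 ≤ q.1.length := List.length_pos_iff.mpr g1
      have f2 : 1 ≤ q.2.length := List.length_pos_iff.mpr g2
      exact hu q ⟨g1, g2, ih q.1 (by omega) m' n' (by omega) (by omega) g3,
        ih q.2 (by omega) m' n' (by omega) (by omega) g4, g5, g6⟩

lemma ulamN_iff_isUlam {w : List Bool} {n : ℕ} (h : w.length ≤ n) : UlamN n w ↔ IsUlam w :=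
  ⟨ulamN_imp w.length w le_rfl n w.length h le_rfl,
   ulamN_imp w.length w le_rfl w.length n le_rfl h⟩

lemma isUlam_iff {w : List Bool} (h : 2 ≤ w.length) :
    IsUlam w ↔ ∃! p : List Bool × List Bool,
      p.1 ≠ [] ∧ p.2 ≠ [] ∧ IsUlam p.1 ∧ IsUlam p.2 ∧ p.1 ≠ p.2 ∧ p.1 ++ p.2 = w := by
  obtain ⟨l, hl⟩ : ∃ l, w.length = l + 1 := ⟨w.length - 1, by omega⟩
  have h1 : ¬(w = [false]) := by intro e; rw [e] at h; simp at h
  have h2 : ¬(w = [true]) := by intro e; rw [e] at h; simp at h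
  unfold IsUlam
  rw [hl]
  simp only [UlamN]
  rw [or_iff_right h1, or_iff_right h2]
  apply existsUnique_congr
  intro p
  constructor
  · rintro ⟨a1, a2, a3, a4, a5, a6⟩
    have hlen : p.1.length + p.2.length = w.length := by rw [← List.length_append, a6]
    have e1 : 1 ≤ p.1.length := List.length_pos_iff.mpr a1
    have e2 : 1 ≤ p.2.length := List.length_pos_iff.mpr a2
    exact ⟨a1, a2, (ulamN_iff_isUlam (by omega)).mp a3, (ulamN_iff_isUlam (by omega)).mp a4,
      a5, a6⟩
  · rintro ⟨a1, a2, a3, a4, a5, a6⟩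
    have hlen : p.1.length + p.2.length = w.length := by rw [← List.length_append, a6]
    have e1 : 1 ≤ p.1.length := List.length_pos_iff.mpr a1
    have e2 : 1 ≤ p.2.length := List.length_pos_iff.mpr a2
    exact ⟨a1, a2, (ulamN_iff_isUlam (by omega)).mpr a3, (ulamN_iff_isUlam (by omega)).mpr a4,
      a5, a6⟩
def zw (k : ℕ) : List Bool := List.replicate k false

lemma zw_len (k : ℕ) : (zw k).length = k := by simp [zw]

lemma zw_succ (k : ℕ) : zw (k + 1) = false :: zw k := by simp [zw, List.replicate_succ]

lemma zw_ne_nil {k : ℕ} (h : k ≠ 0) : zw k ≠ [] := by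
  simp [zw, List.replicate_eq_nil_iff]; omega

lemma ne_of_length_ne {x y : List Bool} (h : x.length ≠ y.length) : x ≠ y :=
  fun e => h (by rw [e])

lemma split_zw {x y : List Bool} {k : ℕ} (h : x ++ y = zw k) :
    ∃ i j, i + j = k ∧ x = zw i ∧ y = zw j := by
  simp only [zw] at h ⊢
  rw [List.append_eq_replicate_iff] at h
  exact ⟨x.length, y.length, h.1, h.2.1, h.2.2⟩

lemma split_aw {x y : List Bool} {a : ℕ} (h : x ++ y = zw a ++ [true]) :
    (∃ i j, i + j = a ∧ x = zw i ∧ y = zw j ++ [true]) ∨ (x = zw a ++ [true] ∧ y = []) := by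
  rcases List.append_eq_append_iff.mp h with ⟨e, he1, he2⟩ | ⟨e, he1, he2⟩
  · obtain ⟨i, j, hij, rfl, rfl⟩ := split_zw he1.symm
    exact Or.inl ⟨i, j, hij, rfl, he2⟩
  · rcases e with _ | ⟨_ | _, e⟩
    · exact Or.inl ⟨a, 0, Nat.add_zero a, by simpa using he1, by simpa [zw] using he2.symm⟩
    · simp at he2
    · simp only [List.cons_append, List.cons.injEq, true_and] at he2
      obtain ⟨rfl, rfl⟩ := List.nil_eq_append_iff.mp he2
      exact Or.inr ⟨by simpa using he1, rfl⟩

lemma split_bw {x y : List Bool} {b : ℕ} (h : x ++ y = true :: zw b) :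
    (x = [] ∧ y = true :: zw b) ∨ (∃ i j, i + j = b ∧ x = true :: zw i ∧ y = zw j) := by
  rcases x with _ | ⟨u, x⟩
  · exact Or.inl ⟨rfl, by simpa using h⟩
  · simp only [List.cons_append, List.cons.injEq] at h
    obtain ⟨rfl, h⟩ := h
    obtain ⟨i, j, hij, rfl, rfl⟩ := split_zw h
    exact Or.inr ⟨i, j, hij, rfl, rfl⟩

lemma split_cw {x y : List Bool} {a : ℕ} (h : x ++ y = zw a ++ [true, false]) :
    (∃ i j, i + j = a ∧ x = zw i ∧ y = zw j ++ [true, false]) ∨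
    (x = zw a ++ [true] ∧ y = [false]) ∨ (x = zw a ++ [true, false] ∧ y = []) := by
  rcases List.append_eq_append_iff.mp h with ⟨e, he1, he2⟩ | ⟨e, he1, he2⟩
  · obtain ⟨i, j, hij, rfl, rfl⟩ := split_zw he1.symm
    exact Or.inl ⟨i, j, hij, rfl, he2⟩
  · rcases e with _ | ⟨_ | _, e⟩
    · exact Or.inl ⟨a, 0, Nat.add_zero a, by simpa using he1, by simpa [zw] using he2.symm⟩
    · simp at he2
    · simp only [List.cons_append, List.cons.injEq, true_and] at he2
      rcases e with _ | ⟨_ | _, e⟩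
      · exact Or.inr (Or.inl ⟨by simpa using he1, by simpa using he2.symm⟩)
      · simp only [List.cons_append, List.cons.injEq, true_and] at he2
        obtain ⟨rfl, rfl⟩ := List.nil_eq_append_iff.mp he2
        exact Or.inr (Or.inr ⟨by simpa using he1, rfl⟩)
      · simp at he2

lemma split_dw {x y : List Bool} {b : ℕ} (h : x ++ y = false :: true :: zw b) :
    (x = [] ∧ y = false :: true :: zw b) ∨ (x = [false] ∧ y = true :: zw b) ∨
    (∃ i j, i + j = b ∧ x = false :: true :: zw i ∧ y = zw j) := by
  rcases x with _ | ⟨u, x⟩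
  · exact Or.inl ⟨rfl, by simpa using h⟩
  simp only [List.cons_append, List.cons.injEq] at h
  obtain ⟨rfl, h⟩ := h
  rcases x with _ | ⟨v, x⟩
  · exact Or.inr (Or.inl ⟨rfl, by simpa using h⟩)
  simp only [List.cons_append, List.cons.injEq] at h
  obtain ⟨rfl, h⟩ := h
  obtain ⟨i, j, hij, rfl, rfl⟩ := split_zw h
  exact Or.inr (Or.inr ⟨i, j, hij, rfl, rfl⟩)

lemma split_ww {x y : List Bool} {a b : ℕ}
    (h : x ++ y = zw a ++ true :: false :: true :: zw b) :
    (∃ i j, i + j = a ∧ x = zw i ∧ y = zw j ++ true :: false :: true :: zw b) ∨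
    (x = zw a ++ [true] ∧ y = false :: true :: zw b) ∨
    (x = zw a ++ [true, false] ∧ y = true :: zw b) ∨
    (∃ i j, i + j = b ∧ x = zw a ++ true :: false :: true :: zw i ∧ y = zw j) := by
  rcases List.append_eq_append_iff.mp h with ⟨e, he1, he2⟩ | ⟨e, he1, he2⟩
  · obtain ⟨i, j, hij, rfl, rfl⟩ := split_zw he1.symm
    exact Or.inl ⟨i, j, hij, rfl, he2⟩
  · rcases e with _ | ⟨_ | _, e⟩
    · exact Or.inl ⟨a, 0, Nat.add_zero a, by simpa using he1, by simpa [zw] using he2.symm⟩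
    · simp at he2
    · simp only [List.cons_append, List.cons.injEq, true_and] at he2
      rcases e with _ | ⟨_ | _, e⟩
      · exact Or.inr (Or.inl ⟨by simpa using he1, by simpa using he2.symm⟩)
      · simp only [List.cons_append, List.cons.injEq, true_and] at he2
        rcases e with _ | ⟨_ | _, e⟩
        · exact Or.inr (Or.inr (Or.inl ⟨by simpa using he1, by simpa using he2.symm⟩))
        · simp at he2
        · simp only [List.cons_append, List.cons.injEq, true_and] at he2
          obtain ⟨i, j, hij, rfl, rfl⟩ := split_zw he2.symm
          exact Or.inr (Or.inr (Or.inr ⟨i, j, hij, by simpa using he1, rfl⟩))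
      · simp at he2
lemma f_ne_aw (a : ℕ) : ([false] : List Bool) ≠ zw a ++ [true] := by
  cases a with
  | zero => simp [zw]
  | succ a => apply ne_of_length_ne; simp [zw]

lemma ulam_false : IsUlam [false] := by
  simp [IsUlam, UlamN]

lemma ulam_true : IsUlam [true] := by
  simp [IsUlam, UlamN]

lemma ulam_zw : ∀ k, IsUlam (zw k) ↔ k = 1 := by
  intro k
  induction k using Nat.strong_induction_on with
  | _ k ih =>
  match k with
  | 0 => exact iff_of_false (ulamN_nil 0) (by decide)
  | 1 => simpa [zw] using ulam_false
  | (k + 2) =>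
    rw [isUlam_iff (by simp [zw])]
    constructor
    · rintro ⟨p, ⟨h1, h2, h3, h4, h5, h6⟩, -⟩
      obtain ⟨i, j, hij, e1, e2⟩ := split_zw h6
      have hi0 : i ≠ 0 := fun e => h1 (by rw [e1, e]; rfl)
      have hj0 : j ≠ 0 := fun e => h2 (by rw [e2, e]; rfl)
      have hi : i = 1 := (ih i (by omega)).mp (e1 ▸ h3)
      have hj : j = 1 := (ih j (by omega)).mp (e2 ▸ h4)
      exact absurd (by rw [e1, e2, hi, hj]) h5
    · omega

lemma ulam_aw : ∀ a, IsUlam (zw a ++ [true]) := by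
  intro a
  induction a with
  | zero => simpa [zw] using ulam_true
  | succ a ih =>
    rw [isUlam_iff (by simp [zw])]
    refine ⟨([false], zw a ++ [true]), ⟨by simp, by simp, ulam_false, ih, f_ne_aw a, ?_⟩, ?_⟩
    · simp [zw_succ]
    · rintro ⟨x, y⟩ ⟨h1, h2, h3, h4, h5, h6⟩
      rcases split_aw h6 with ⟨i, j, hij, rfl, rfl⟩ | ⟨rfl, rfl⟩
      · have hi0 : i ≠ 0 := fun e => h1 (by rw [e]; rfl)
        have hi : i = 1 := (ulam_zw i).mp h3
        subst hi
        have : j = a := by omega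
        subst this
        rfl
      · exact absurd rfl h2

lemma ulam_bw : ∀ b, IsUlam (true :: zw b) := by
  intro b
  induction b with
  | zero => simpa [zw] using ulam_true
  | succ b ih =>
    rw [isUlam_iff (by simp [zw])]
    refine ⟨(true :: zw b, [false]), ⟨by simp, by simp, ih, ulam_false, by simp, ?_⟩, ?_⟩
    · simp [zw, List.replicate_succ']
    · rintro ⟨x, y⟩ ⟨h1, h2, h3, h4, h5, h6⟩
      rcases split_bw h6 with ⟨rfl, rfl⟩ | ⟨i, j, hij, rfl, rfl⟩
      · exact absurd rfl h1
      · have hj0 : j ≠ 0 := fun e => h2 (by rw [e]; rfl)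
        have hj : j = 1 := (ulam_zw j).mp h4
        subst hj
        have : i = b := by omega
        subst this
        rfl

lemma ulam_cw : ∀ a, IsUlam (zw a ++ [true, false]) ↔ Even a := by
  intro a
  induction a with
  | zero =>
    rw [isUlam_iff (by simp [zw])]
    refine iff_of_true ⟨([true], [false]), ⟨by simp, by simp, ulam_true, ulam_false,
      by simp, by simp [zw]⟩, ?_⟩ (Even.zero)
    rintro ⟨x, y⟩ ⟨h1, h2, h3, h4, h5, h6⟩
    rcases split_cw h6 with ⟨i, j, hij, rfl, rfl⟩ | ⟨rfl, rfl⟩ | ⟨rfl, rfl⟩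
    · have : i = 0 := by omega
      exact absurd (by rw [this]; rfl) h1
    · simp [zw]
    · exact absurd rfl h2
  | succ a ih =>
    rw [isUlam_iff (by simp [zw])]
    by_cases hev : Even a
    · -- a even, a+1 odd: two representations
      refine iff_of_false ?_ (by simp [Nat.even_add_one]; exact hev)
      intro hEU
      have w1 : _ := hEU.unique
        (y₁ := (([false], zw a ++ [true, false]) : List Bool × List Bool))
        (y₂ := ((zw (a+1) ++ [true], [false]) : List Bool × List Bool))
        ⟨by simp, by simp [zw], ulam_false, ih.mpr hev, ne_of_length_ne (by simp [zw]),
          by simp [zw_succ]⟩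
        ⟨by simp [zw], by simp, ulam_aw (a+1), ulam_false, ne_of_length_ne (by simp [zw]),
          by simp⟩
      have := congrArg (fun q => q.1.length) w1
      simp [zw] at this
    · -- a odd, a+1 even: unique representation
      refine iff_of_true ?_ (Nat.even_add_one.mpr hev)
      refine ⟨(zw (a+1) ++ [true], [false]), ⟨by simp [zw], by simp, ulam_aw (a+1), ulam_false,
        ne_of_length_ne (by simp [zw]), by simp⟩, ?_⟩
      rintro ⟨x, y⟩ ⟨h1, h2, h3, h4, h5, h6⟩
      rcases split_cw h6 with ⟨i, j, hij, rfl, rfl⟩ | ⟨rfl, rfl⟩ | ⟨rfl, rfl⟩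
      · have hi0 : i ≠ 0 := fun e => h1 (by rw [e]; rfl)
        have hi : i = 1 := (ulam_zw i).mp h3
        subst hi
        have : j = a := by omega
        subst this
        exact absurd (ih.mp h4) hev
      · rfl
      · exact absurd rfl h2

lemma ulam_dw : ∀ b, IsUlam (false :: true :: zw b) ↔ Even b := by
  intro b
  induction b with
  | zero =>
    rw [isUlam_iff (by simp [zw])]
    refine iff_of_true ⟨([false], [true]), ⟨by simp, by simp, ulam_false, ulam_true,
      by simp, by simp [zw]⟩, ?_⟩ (Even.zero)
    rintro ⟨x, y⟩ ⟨h1, h2, h3, h4, h5, h6⟩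
    rcases split_dw h6 with ⟨rfl, rfl⟩ | ⟨rfl, rfl⟩ | ⟨i, j, hij, rfl, rfl⟩
    · exact absurd rfl h1
    · simp [zw]
    · have : j = 0 := by omega
      exact absurd (by rw [this]; rfl) h2
  | succ b ih =>
    rw [isUlam_iff (by simp [zw])]
    by_cases hev : Even b
    · refine iff_of_false ?_ (by simp [Nat.even_add_one]; exact hev)
      intro hEU
      have w1 : _ := hEU.unique
        (y₁ := ((false :: true :: zw b, [false]) : List Bool × List Bool))
        (y₂ := (([false], true :: zw (b+1)) : List Bool × List Bool))
        ⟨by simp, by simp, ih.mpr hev, ulam_false, ne_of_length_ne (by simp [zw]),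
          by simp [zw, List.replicate_succ']⟩
        ⟨by simp, by simp, ulam_false, ulam_bw (b+1), ne_of_length_ne (by simp [zw]), by simp⟩
      have := congrArg (fun q => q.1.length) w1
      simp [zw] at this
    · refine iff_of_true ?_ (Nat.even_add_one.mpr hev)
      refine ⟨([false], true :: zw (b+1)), ⟨by simp, by simp, ulam_false, ulam_bw (b+1),
        ne_of_length_ne (by simp [zw]), by simp⟩, ?_⟩
      rintro ⟨x, y⟩ ⟨h1, h2, h3, h4, h5, h6⟩
      rcases split_dw h6 with ⟨rfl, rfl⟩ | ⟨rfl, rfl⟩ | ⟨i, j, hij, rfl, rfl⟩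
      · exact absurd rfl h1
      · rfl
      · have hj0 : j ≠ 0 := fun e => h2 (by rw [e]; rfl)
        have hj : j = 1 := (ulam_zw j).mp h4
        subst hj
        have : i = b := by omega
        subst this
        exact absurd (ih.mp h3) hev
lemma aw_ne_dw {a b : ℕ} (h : ¬(a = 1 ∧ b = 0)) :
    zw a ++ [true] ≠ false :: true :: zw b := by
  intro e
  have hl := congrArg List.length e
  simp [zw] at hl
  rcases b with _ | b
  · exact h ⟨by omega, rfl⟩
  · have hrw : false :: true :: zw (b + 1) = (false :: true :: zw b) ++ [false] := by
      simp [zw, List.replicate_succ']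
    rw [hrw] at e
    have h1 := congrArg List.getLast? e
    rw [List.getLast?_concat, List.getLast?_concat] at h1
    simp at h1

lemma cw_ne_bw {a b : ℕ} (h : ¬(a = 0 ∧ b = 1)) :
    zw a ++ [true, false] ≠ true :: zw b := by
  intro e
  have hl := congrArg List.length e
  simp [zw] at hl
  rcases a with _ | a
  · exact h ⟨rfl, by omega⟩
  · rw [zw_succ] at e
    simp at e

lemma valid_ww {a b : ℕ} {x y : List Bool}
    (h1 : x ≠ []) (h2 : y ≠ []) (h3 : IsUlam x) (h4 : IsUlam y) (h5 : x ≠ y)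
    (h6 : x ++ y = zw a ++ true :: false :: true :: zw b) :
    (1 ≤ a ∧ IsUlam (zw (a-1) ++ true :: false :: true :: zw b) ∧
      x = [false] ∧ y = zw (a-1) ++ true :: false :: true :: zw b) ∨
    (Even b ∧ ¬(a = 1 ∧ b = 0) ∧ x = zw a ++ [true] ∧ y = false :: true :: zw b) ∨
    (Even a ∧ ¬(a = 0 ∧ b = 1) ∧ x = zw a ++ [true, false] ∧ y = true :: zw b) ∨
    (1 ≤ b ∧ IsUlam (zw a ++ true :: false :: true :: zw (b-1)) ∧
      x = zw a ++ true :: false :: true :: zw (b-1) ∧ y = [false]) := by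
  rcases split_ww h6 with ⟨i, j, hij, rfl, rfl⟩ | ⟨rfl, rfl⟩ | ⟨rfl, rfl⟩ | ⟨i, j, hij, rfl, rfl⟩
  · have hi0 : i ≠ 0 := fun e => h1 (by rw [e]; rfl)
    have hi : i = 1 := (ulam_zw i).mp h3
    subst hi
    have hj : j = a - 1 := by omega
    subst hj
    exact Or.inl ⟨by omega, h4, rfl, rfl⟩
  · refine Or.inr (Or.inl ⟨(ulam_dw b).mp h4, ?_, rfl, rfl⟩)
    rintro ⟨rfl, rfl⟩
    exact h5 (by simp [zw])
  · refine Or.inr (Or.inr (Or.inl ⟨(ulam_cw a).mp h3, ?_, rfl, rfl⟩))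
    rintro ⟨rfl, rfl⟩
    exact h5 (by simp [zw])
  · have hj0 : j ≠ 0 := fun e => h2 (by rw [e]; rfl)
    have hj : j = 1 := (ulam_zw j).mp h4
    subst hj
    have hi : i = b - 1 := by omega
    subst hi
    exact Or.inr (Or.inr (Or.inr ⟨by omega, h3, rfl, rfl⟩))

lemma ulam_ww : ∀ (n a b : ℕ), a + b = n →
    (IsUlam (zw a ++ true :: false :: true :: zw b) ↔ (2 ≤ a + b ∧ Odd (a + b))) := by
  intro n
  induction n using Nat.strong_induction_on with
  | _ n ih =>
  intro a b hn
  rw [isUlam_iff (by simp [zw]; omega)]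
  by_cases hodd : Odd (a + b)
  · by_cases hab : 2 ≤ a + b
    · -- sum odd, ≥ 3 : unique representation
      refine iff_of_true ?_ ⟨hab, hodd⟩
      have h3 : 3 ≤ a + b := by
        rcases hodd with ⟨t, ht⟩; omega
      rcases Nat.even_or_odd a with hea | hoa
      · -- a even, b odd: witness (cw a, bw b)
        have hob : ¬ Even b := by
          intro hb; rcases hea with ⟨s, hs⟩; rcases hb with ⟨t, ht⟩
          rcases hodd with ⟨u, hu⟩; omega
        refine ⟨(zw a ++ [true, false], true :: zw b), ⟨by simp [zw], by simp,
          (ulam_cw a).mpr hea, ulam_bw b, cw_ne_bw (fun e => by omega), by simp⟩, ?_⟩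
        rintro ⟨x, y⟩ ⟨h1, h2, h3', h4, h5, h6⟩
        rcases valid_ww h1 h2 h3' h4 h5 h6 with ⟨ha1, hU, rfl, rfl⟩ |
          ⟨hEb, _, rfl, rfl⟩ | ⟨_, _, rfl, rfl⟩ | ⟨hb1, hU, rfl, rfl⟩
        · rw [ih (a - 1 + b) (by omega) (a-1) b rfl] at hU
          rcases hU.2 with ⟨u, hu⟩; rcases hodd with ⟨v, hv⟩; omega
        · exact absurd hEb hob
        · rfl
        · rw [ih (a + (b - 1)) (by omega) a (b-1) rfl] at hU
          rcases hU.2 with ⟨u, hu⟩; rcases hodd with ⟨v, hv⟩; omega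
      · -- a odd, b even: witness (aw a, dw b)
        have heb : Even b := by
          rcases hodd with ⟨u, hu⟩; rcases hoa with ⟨s, hs⟩
          exact ⟨(b/2), by omega⟩
        have hoa' : ¬ Even a := by
          intro ha; rcases ha with ⟨s, hs⟩; rcases hoa with ⟨t, ht⟩; omega
        refine ⟨(zw a ++ [true], false :: true :: zw b), ⟨by simp [zw], by simp,
          ulam_aw a, (ulam_dw b).mpr heb, aw_ne_dw (fun e => by omega), by simp⟩, ?_⟩
        rintro ⟨x, y⟩ ⟨h1, h2, h3', h4, h5, h6⟩
        rcases valid_ww h1 h2 h3' h4 h5 h6 with ⟨ha1, hU, rfl, rfl⟩ |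
          ⟨_, _, rfl, rfl⟩ | ⟨hEa, _, rfl, rfl⟩ | ⟨hb1, hU, rfl, rfl⟩
        · rw [ih (a - 1 + b) (by omega) (a-1) b rfl] at hU
          rcases hU.2 with ⟨u, hu⟩; rcases hodd with ⟨v, hv⟩; omega
        · rfl
        · exact absurd hEa hoa'
        · rw [ih (a + (b - 1)) (by omega) a (b-1) rfl] at hU
          rcases hU.2 with ⟨u, hu⟩; rcases hodd with ⟨v, hv⟩; omega
    · -- sum odd, < 2, i.e. a + b = 1: no representation
      refine iff_of_false ?_ (fun c => hab c.1)
      rintro ⟨⟨x, y⟩, ⟨h1, h2, h3, h4, h5, h6⟩, -⟩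
      have hab1 : a + b = 1 := by rcases hodd with ⟨t, ht⟩; omega
      rcases valid_ww h1 h2 h3 h4 h5 h6 with ⟨ha1, hU, rfl, rfl⟩ |
        ⟨hEb, hx, rfl, rfl⟩ | ⟨hEa, hx, rfl, rfl⟩ | ⟨hb1, hU, rfl, rfl⟩
      · rw [ih (a - 1 + b) (by omega) (a-1) b rfl] at hU
        omega
      · -- Even b and ¬(a=1 ∧ b=0): impossible since a+b=1
        rcases hEb with ⟨t, ht⟩
        exact hx ⟨by omega, by omega⟩
      · rcases hEa with ⟨t, ht⟩
        exact hx ⟨by omega, by omega⟩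
      · rw [ih (a + (b - 1)) (by omega) a (b-1) rfl] at hU
        omega
  · -- sum even: not Ulam
    refine iff_of_false ?_ (fun c => hodd c.2)
    have heab : Even (a + b) := Nat.even_or_odd (a+b) |>.resolve_right hodd
    rcases Nat.even_or_odd a with hea | hoa
    · -- a, b both even: two representations
      have heb : Even b := by
        rcases heab with ⟨s, hs⟩; rcases hea with ⟨t, ht⟩; exact ⟨b/2, by omega⟩
      intro hEU
      have w1 := hEU.unique
        (y₁ := ((zw a ++ [true], false :: true :: zw b) : List Bool × List Bool))
        (y₂ := ((zw a ++ [true, false], true :: zw b) : List Bool × List Bool))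
        ⟨by simp [zw], by simp, ulam_aw a, (ulam_dw b).mpr heb,
          aw_ne_dw (fun e => by rcases hea with ⟨t, ht⟩; omega), by simp⟩
        ⟨by simp [zw], by simp, (ulam_cw a).mpr hea, ulam_bw b,
          cw_ne_bw (fun e => by rcases heb with ⟨t, ht⟩; omega), by simp⟩
      have := congrArg (fun q => q.1.length) w1
      simp [zw] at this
    · -- a, b both odd
      have hob : ¬ Even b := by
        intro hb; rcases heab with ⟨s, hs⟩; rcases hb with ⟨t, ht⟩
        rcases hoa with ⟨u, hu⟩; omega
      have ha1 : 1 ≤ a := by rcases hoa with ⟨u, hu⟩; omega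
      have hb1 : 1 ≤ b := by
        rcases Nat.even_or_odd b with hb | hb
        · exact absurd hb hob
        · rcases hb with ⟨u, hu⟩; omega
      by_cases h4 : 4 ≤ a + b
      · -- two representations via S1 and S4
        have hU1 : IsUlam (zw (a-1) ++ true :: false :: true :: zw b) := by
          rw [ih (a - 1 + b) (by omega) (a-1) b rfl]
          constructor
          · omega
          · rcases hoa with ⟨u, hu⟩; rcases heab with ⟨s, hs⟩; exact ⟨(a-1+b)/2, by omega⟩
        have hU2 : IsUlam (zw a ++ true :: false :: true :: zw (b-1)) := by
          rw [ih (a + (b - 1)) (by omega) a (b-1) rfl]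
          constructor
          · omega
          · rcases hoa with ⟨u, hu⟩; rcases heab with ⟨s, hs⟩; exact ⟨(a+(b-1))/2, by omega⟩
        intro hEU
        have w1 := hEU.unique
          (y₁ := (([false], zw (a-1) ++ true :: false :: true :: zw b) : List Bool × List Bool))
          (y₂ := ((zw a ++ true :: false :: true :: zw (b-1), [false]) : List Bool × List Bool))
          ⟨by simp, by simp [zw], ulam_false, hU1, ne_of_length_ne (by simp [zw]; omega),
            by rw [show zw a = false :: zw (a-1) from by rw [← zw_succ]; congr 1; omega]; simp⟩
          ⟨by simp [zw], by simp, hU2, ulam_false, ne_of_length_ne (by simp [zw]; omega),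
            by rw [show zw b = zw (b-1) ++ [false] from by
              rw [show b = (b-1) + 1 from by omega, zw, List.replicate_succ']; rfl]; simp⟩
        have := congrArg (fun q => q.1.length) w1
        simp [zw] at this
        omega
      · -- a = b = 1: no representation
        obtain ⟨u, hu⟩ := hoa
        obtain ⟨v, hv⟩ := Nat.not_even_iff_odd.mp hob
        have ha : a = 1 := by omega
        have hb : b = 1 := by omega
        subst ha; subst hb
        rintro ⟨⟨x, y⟩, ⟨h1, h2, h3, h4', h5, h6⟩, -⟩
        rcases valid_ww h1 h2 h3 h4' h5 h6 with ⟨_, hU, rfl, rfl⟩ |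
          ⟨hEb, _, rfl, rfl⟩ | ⟨hEa, _, rfl, rfl⟩ | ⟨_, hU, rfl, rfl⟩
        · rw [ih (0 + 1) (by omega) 0 1 rfl] at hU
          exact absurd hU.1 (by omega)
        · rcases hEb with ⟨t, ht⟩; omega
        · rcases hEa with ⟨t, ht⟩; omega
        · rw [ih (1 + 0) (by omega) 1 0 rfl] at hU
          exact absurd hU.1 (by omega)

theorem ulam_101 (a b : ℕ) (hab : 2 ≤ a + b) :
    IsUlam (List.replicate a false ++ [true, false, true] ++ List.replicate b false) ↔
      Odd (a + b) := by
  have hrw : List.replicate a false ++ [true, false, true] ++ List.replicate b false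
      = zw a ++ true :: false :: true :: zw b := by
    simp [zw]
  rw [hrw, ulam_ww (a + b) a b rfl]
  exact and_iff_right hab
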